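/- arXiv:1912.09835 — 3 statements merged into one kernel-verified Lean document; each statement's English description precedes it below -/
import Mathlib

section
/- Let α > 0 and 0 ≤ γ < 2, and let Ω be a bounded measurable subset of ℝ². Suppose (u_j) is a sequence of measurable functions from Ω to ℝ that converges Lebesgue-almost everywhere on Ω to a measurable function u, and suppose sup_j ∫_Ω (u_j⁺(x))² · exp(α (u_j⁺(x))²) · |x|^{-γ} dx < ∞. Then ∫_Ω exp(α (u_j⁺(x))²) · |x|^{-γ} dx converges to ∫_Ω exp(α (u⁺(x))²) · |x|^{-γ} dx as j → ∞. -/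
open MeasureTheory Real Filter Topology

lemma aux_pow_rpow (x : ℝ) (hx : 0 ≤ x) (y : ℝ) (n : ℕ) :
    ((x ^ n : ℝ)) ^ y = (x ^ y) ^ n := by
  rw [← Real.rpow_natCast x n, ← Real.rpow_mul hx, mul_comm, Real.rpow_mul hx,
    Real.rpow_natCast]

lemma aux_fin (γ R : ℝ) (hγ0 : 0 ≤ γ) (hγ2 : γ < 2) (hR : 0 < R) :
    ∫⁻ x in Metric.ball (0 : EuclideanSpace ℝ (Fin 2)) R,
      ENNReal.ofReal (‖x‖ ^ (-γ)) < ⊤ := by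
  set V : ENNReal := volume (Metric.ball (0 : EuclideanSpace ℝ (Fin 2)) 1) with hV
  have hVlt : V < ⊤ := measure_ball_lt_top
  set A : ℕ → Set (EuclideanSpace ℝ (Fin 2)) :=
    fun n => {x : EuclideanSpace ℝ (Fin 2) | R / 2 ^ (n + 1) ≤ ‖x‖} ∩
      Metric.ball 0 (R / 2 ^ n) with hA
  have hsub : Metric.ball (0 : EuclideanSpace ℝ (Fin 2)) R ⊆ {0} ∪ ⋃ n, A n := by
    intro x hx
    rcases eq_or_ne x 0 with h0 | h0
    · exact Or.inl h0
    right
    have hxn : 0 < ‖x‖ := norm_pos_iff.2 h0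
    have hex : ∃ n : ℕ, R / 2 ^ (n + 1) ≤ ‖x‖ := by
      obtain ⟨n, hn⟩ := pow_unbounded_of_one_lt (R / ‖x‖) (one_lt_two (α := ℝ))
      refine ⟨n, ?_⟩
      rw [div_le_iff₀ (by positivity)]
      calc R = (R / ‖x‖) * ‖x‖ := by field_simp
        _ ≤ 2 ^ n * ‖x‖ := by nlinarith [hn.le]
        _ ≤ ‖x‖ * 2 ^ (n + 1) := by
            rw [pow_succ]
            nlinarith [pow_pos (two_pos (α := ℝ)) n, hxn]
    classical
    refine Set.mem_iUnion.2 ⟨Nat.find hex, Nat.find_spec hex, ?_⟩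
    rw [Metric.mem_ball, dist_zero_right]
    rcases Nat.eq_zero_or_pos (Nat.find hex) with hn | hn
    · rw [hn]; simpa using (mem_ball_zero_iff.1 hx)
    · have h := Nat.find_min hex (m := Nat.find hex - 1) (by omega)
      push_neg at h
      rwa [Nat.sub_add_cancel hn] at h
  have hbound : ∀ n, ∫⁻ x in A n, ENNReal.ofReal (‖x‖ ^ (-γ)) ≤
      ENNReal.ofReal ((R / 2 ^ (n + 1)) ^ (-γ) * (R / 2 ^ n) ^ 2) * V := by
    intro n
    have hmA : MeasurableSet (A n) :=
      (measurableSet_le measurable_const measurable_norm).inter measurableSet_ball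
    have h1 : ∫⁻ x in A n, ENNReal.ofReal (‖x‖ ^ (-γ)) ≤
        ∫⁻ _ in A n, ENNReal.ofReal ((R / 2 ^ (n + 1)) ^ (-γ)) := by
      refine setLIntegral_mono' hmA fun x hx => ?_
      refine ENNReal.ofReal_le_ofReal ?_
      exact Real.rpow_le_rpow_of_nonpos (by positivity) hx.1 (neg_nonpos.2 hγ0)
    have h2 : volume (A n) ≤ ENNReal.ofReal ((R / 2 ^ n) ^ 2) * V := by
      calc volume (A n)
          ≤ volume (Metric.ball (0 : EuclideanSpace ℝ (Fin 2)) (R / 2 ^ n)) :=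
            measure_mono Set.inter_subset_right
        _ = ENNReal.ofReal ((R / 2 ^ n) ^ Module.finrank ℝ (EuclideanSpace ℝ (Fin 2))) * V := by
            rw [Measure.addHaar_ball volume 0 (by positivity : (0:ℝ) ≤ R / 2 ^ n)]
        _ = ENNReal.ofReal ((R / 2 ^ n) ^ 2) * V := by
            rw [finrank_euclideanSpace_fin]
    calc ∫⁻ x in A n, ENNReal.ofReal (‖x‖ ^ (-γ))
        ≤ ∫⁻ _ in A n, ENNReal.ofReal ((R / 2 ^ (n + 1)) ^ (-γ)) := h1
      _ = ENNReal.ofReal ((R / 2 ^ (n + 1)) ^ (-γ)) * volume (A n) := by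
          rw [setLIntegral_const]
      _ ≤ ENNReal.ofReal ((R / 2 ^ (n + 1)) ^ (-γ)) * (ENNReal.ofReal ((R / 2 ^ n) ^ 2) * V) :=
          mul_le_mul_right h2 _
      _ = ENNReal.ofReal ((R / 2 ^ (n + 1)) ^ (-γ) * (R / 2 ^ n) ^ 2) * V := by
          rw [ENNReal.ofReal_mul (by positivity), mul_assoc]
  have hnn : ∀ n : ℕ, 0 ≤ (R / 2 ^ (n + 1)) ^ (-γ) * (R / 2 ^ n) ^ 2 := by
    intro n; positivity
  have hsum : Summable (fun n : ℕ => (R / 2 ^ (n + 1)) ^ (-γ) * (R / 2 ^ n) ^ 2) := by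
    set t : ℝ := 2⁻¹ with ht
    have ht0 : (0:ℝ) ≤ t := by norm_num [ht]
    have htg : t ^ (-γ) = (2:ℝ) ^ γ := by
      rw [ht, Real.inv_rpow (by norm_num : (0:ℝ) ≤ 2), Real.rpow_neg (by norm_num), inv_inv]
    have htt : t ^ 2 = (1:ℝ)/4 := by norm_num [ht]
    clear_value t
    have hq1 : t ^ (-γ) * t ^ 2 < 1 := by
      have h4 : (2:ℝ) ^ γ < 4 := by
        have h := Real.rpow_lt_rpow_of_exponent_lt (x := 2) one_lt_two hγ2
        have h2 : (2:ℝ) ^ (2:ℝ) = 4 := by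
          have hc : ((2:ℕ):ℝ) = (2:ℝ) := by norm_num
          rw [← hc, Real.rpow_natCast]; norm_num
        rwa [h2] at h
      rw [htg, htt]; linarith
    have hq0 : (0:ℝ) ≤ t ^ (-γ) * t ^ 2 := by
      rw [htg, htt]; positivity
    have hkey : ∀ n : ℕ, (R / 2 ^ (n + 1)) ^ (-γ) * (R / 2 ^ n) ^ 2 =
        ((R / 2) ^ (-γ) * R ^ 2) * (t ^ (-γ) * t ^ 2) ^ n := by
      intro n
      have e1 : R / 2 ^ (n + 1) = (R / 2) * t ^ n := by
        rw [ht, inv_pow]; ring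
      have e2 : R / 2 ^ n = R * t ^ n := by
        rw [ht, inv_pow]; ring
      have htn : (0:ℝ) ≤ t ^ n := pow_nonneg ht0 n
      rw [e1, e2, Real.mul_rpow (by positivity) htn, aux_pow_rpow t ht0 (-γ) n,
        mul_pow (t ^ (-γ)) (t ^ 2) n]
      ring
    simp_rw [hkey]
    exact (summable_geometric_of_lt_one hq0 hq1).mul_left _
  calc ∫⁻ x in Metric.ball (0 : EuclideanSpace ℝ (Fin 2)) R, ENNReal.ofReal (‖x‖ ^ (-γ))
      ≤ ∫⁻ x in ({0} ∪ ⋃ n, A n : Set (EuclideanSpace ℝ (Fin 2))),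
          ENNReal.ofReal (‖x‖ ^ (-γ)) := lintegral_mono_set hsub
    _ ≤ (∫⁻ x in ({0} : Set (EuclideanSpace ℝ (Fin 2))), ENNReal.ofReal (‖x‖ ^ (-γ))) +
        ∫⁻ x in (⋃ n, A n), ENNReal.ofReal (‖x‖ ^ (-γ)) := lintegral_union_le _ _ _
    _ ≤ 0 + ∑' n, ∫⁻ x in A n, ENNReal.ofReal (‖x‖ ^ (-γ)) := by
        refine add_le_add (le_of_eq ?_) (lintegral_iUnion_le _ _)
        exact setLIntegral_measure_zero _ _ (measure_singleton 0)
    _ ≤ 0 + ∑' n, ENNReal.ofReal ((R / 2 ^ (n + 1)) ^ (-γ) * (R / 2 ^ n) ^ 2) * V :=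
        add_le_add le_rfl (ENNReal.tsum_le_tsum hbound)
    _ = (∑' n, ENNReal.ofReal ((R / 2 ^ (n + 1)) ^ (-γ) * (R / 2 ^ n) ^ 2)) * V := by
        rw [zero_add, ENNReal.tsum_mul_right]
    _ < ⊤ := by
        apply ENNReal.mul_lt_top _ hVlt
        rw [← ENNReal.ofReal_tsum_of_nonneg hnn hsum]
        exact ENNReal.ofReal_lt_top


/-- Let α > 0 and 0 ≤ γ < 2, and let Ω be a bounded measurable subset of ℝ².
If a sequence (u_j) of measurable functions converges a.e. on Ω to a measurable u and
sup_j ∫_Ω (u_j⁺)² e^{α (u_j⁺)²} |x|^{-γ} dx < ∞, then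
∫_Ω e^{α (u_j⁺)²} |x|^{-γ} dx → ∫_Ω e^{α (u⁺)²} |x|^{-γ} dx. -/
theorem stmt_0 (α γ : ℝ) (hα : 0 < α) (hγ0 : 0 ≤ γ) (hγ2 : γ < 2)
    (Ω : Set (EuclideanSpace ℝ (Fin 2))) (hΩm : MeasurableSet Ω)
    (hΩb : Bornology.IsBounded Ω)
    (u : ℕ → EuclideanSpace ℝ (Fin 2) → ℝ) (u₀ : EuclideanSpace ℝ (Fin 2) → ℝ)
    (hum : ∀ j, Measurable (u j)) (hu₀m : Measurable u₀)
    (hae : ∀ᵐ x ∂(volume.restrict Ω), Tendsto (fun j => u j x) atTop (𝓝 (u₀ x)))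
    (hsup : (⨆ j, ∫⁻ x in Ω,
        ENNReal.ofReal ((max (u j x) 0) ^ 2 * Real.exp (α * (max (u j x) 0) ^ 2)
          * ‖x‖ ^ (-γ))) < ⊤) :
    Tendsto (fun j => ∫⁻ x in Ω,
        ENNReal.ofReal (Real.exp (α * (max (u j x) 0) ^ 2) * ‖x‖ ^ (-γ))) atTop
      (𝓝 (∫⁻ x in Ω, ENNReal.ofReal (Real.exp (α * (max (u₀ x) 0) ^ 2) * ‖x‖ ^ (-γ)))) := by
  set f : ℕ → EuclideanSpace ℝ (Fin 2) → ENNReal :=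
    fun j x => ENNReal.ofReal (Real.exp (α * (max (u j x) 0) ^ 2) * ‖x‖ ^ (-γ)) with hf
  set F : EuclideanSpace ℝ (Fin 2) → ENNReal :=
    fun x => ENNReal.ofReal (Real.exp (α * (max (u₀ x) 0) ^ 2) * ‖x‖ ^ (-γ)) with hF
  set g : ℕ → EuclideanSpace ℝ (Fin 2) → ENNReal := fun j x =>
    ENNReal.ofReal ((max (u j x) 0) ^ 2 * Real.exp (α * (max (u j x) 0) ^ 2) * ‖x‖ ^ (-γ))
    with hg
  set C : ENNReal := ⨆ j, ∫⁻ x in Ω, g j x with hC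
  have hCne : C ≠ ⊤ := hsup.ne
  -- measurability
  have hwm : Measurable fun x : EuclideanSpace ℝ (Fin 2) => ‖x‖ ^ (-γ) := measurable_norm.pow measurable_const
  have hfm : ∀ j, Measurable (f j) := by
    intro j
    exact ((Real.measurable_exp.comp
      ((measurable_const.mul (((hum j).max measurable_const).pow_const 2)))).mul
      hwm).ennreal_ofReal
  have hFm : Measurable F :=
    ((Real.measurable_exp.comp
      ((measurable_const.mul ((hu₀m.max measurable_const).pow_const 2)))).mul
      hwm).ennreal_ofReal
  have hgm : ∀ j, Measurable (g j) := by
    intro j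
    exact (((((hum j).max measurable_const).pow_const 2).mul
      (Real.measurable_exp.comp
        ((measurable_const.mul (((hum j).max measurable_const).pow_const 2))))).mul
      hwm).ennreal_ofReal
  -- finiteness of the weight integral
  obtain ⟨R, hRsub⟩ := hΩb.subset_closedBall 0
  have hΩR : Ω ⊆ Metric.ball (0 : EuclideanSpace ℝ (Fin 2)) (max R 0 + 1) := by
    intro x hx
    have := hRsub hx
    rw [Metric.mem_closedBall, dist_zero_right] at this
    rw [Metric.mem_ball, dist_zero_right]
    have : ‖x‖ ≤ max R 0 := le_trans this (le_max_left _ _)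
    linarith
  have hW : ∫⁻ x in Ω, ENNReal.ofReal (‖x‖ ^ (-γ)) < ⊤ :=
    lt_of_le_of_lt (lintegral_mono_set hΩR)
      (aux_fin γ (max R 0 + 1) hγ0 hγ2 (by positivity))
  -- the truncation dominator
  set D : ℝ → EuclideanSpace ℝ (Fin 2) → ENNReal :=
    fun M x => ENNReal.ofReal (Real.exp (α * M ^ 2) * ‖x‖ ^ (-γ)) with hD
  have hDm : ∀ M, Measurable (D M) := fun M =>
    (measurable_const.mul hwm).ennreal_ofReal
  have hDfin : ∀ M : ℝ, ∫⁻ x in Ω, D M x < ⊤ := by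
    intro M
    have : ∀ x : EuclideanSpace ℝ (Fin 2), D M x = ENNReal.ofReal (Real.exp (α * M ^ 2)) *
        ENNReal.ofReal (‖x‖ ^ (-γ)) := by
      intro x
      rw [hD, ← ENNReal.ofReal_mul (Real.exp_nonneg _)]
    simp_rw [this]
    rw [lintegral_const_mul _ hwm.ennreal_ofReal]
    exact ENNReal.mul_lt_top ENNReal.ofReal_lt_top hW
  -- pointwise domination
  have hptwise : ∀ (M : ℝ), 0 < M → ∀ (j : ℕ) (x : EuclideanSpace ℝ (Fin 2)),
      f j x ≤ min (f j x) (D M x) + ENNReal.ofReal (1 / M ^ 2) * g j x := by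
    intro M hM j x
    set a : ℝ := max (u j x) 0 with ha
    have ha0 : 0 ≤ a := le_max_right _ _
    have hr0 : 0 ≤ ‖x‖ ^ (-γ) := Real.rpow_nonneg (norm_nonneg x) _
    by_cases h : a ≤ M
    · have hfD : f j x ≤ D M x := by
        refine ENNReal.ofReal_le_ofReal (mul_le_mul_of_nonneg_right ?_ hr0)
        refine Real.exp_le_exp.2 (mul_le_mul_of_nonneg_left ?_ hα.le)
        exact pow_le_pow_left₀ ha0 h 2
      rw [min_eq_left hfD]
      exact le_self_add
    · push_neg at h
      have hM2 : M ^ 2 ≤ a ^ 2 := by nlinarith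
      have hle : Real.exp (α * a ^ 2) * ‖x‖ ^ (-γ) ≤
          1 / M ^ 2 * (a ^ 2 * Real.exp (α * a ^ 2) * ‖x‖ ^ (-γ)) := by
        have h1 : (1:ℝ) ≤ a ^ 2 / M ^ 2 := by
          rw [le_div_iff₀ (by positivity)]; linarith
        have hE : (0:ℝ) ≤ Real.exp (α * a ^ 2) * ‖x‖ ^ (-γ) :=
          mul_nonneg (Real.exp_nonneg _) hr0
        have h2 := mul_le_mul_of_nonneg_right h1 hE
        calc Real.exp (α * a ^ 2) * ‖x‖ ^ (-γ)
            = 1 * (Real.exp (α * a ^ 2) * ‖x‖ ^ (-γ)) := (one_mul _).symm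
          _ ≤ (a ^ 2 / M ^ 2) * (Real.exp (α * a ^ 2) * ‖x‖ ^ (-γ)) := h2
          _ = 1 / M ^ 2 * (a ^ 2 * Real.exp (α * a ^ 2) * ‖x‖ ^ (-γ)) := by ring
      have : f j x ≤ ENNReal.ofReal (1 / M ^ 2) * g j x := by
        rw [hf, hg, ← ENNReal.ofReal_mul (by positivity)]
        exact ENNReal.ofReal_le_ofReal hle
      exact le_add_left this
  -- integral domination
  have hint : ∀ (M : ℝ), 0 < M → ∀ j,
      ∫⁻ x in Ω, f j x ≤ (∫⁻ x in Ω, min (f j x) (D M x)) + ENNReal.ofReal (1 / M ^ 2) * C := by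
    intro M hM j
    calc ∫⁻ x in Ω, f j x
        ≤ ∫⁻ x in Ω, (min (f j x) (D M x) + ENNReal.ofReal (1 / M ^ 2) * g j x) :=
          lintegral_mono fun x => hptwise M hM j x
      _ = (∫⁻ x in Ω, min (f j x) (D M x)) +
          ∫⁻ x in Ω, ENNReal.ofReal (1 / M ^ 2) * g j x :=
          lintegral_add_left ((hfm j).min (hDm M)) _
      _ = (∫⁻ x in Ω, min (f j x) (D M x)) +
          ENNReal.ofReal (1 / M ^ 2) * ∫⁻ x in Ω, g j x := by
          rw [lintegral_const_mul _ (hgm j)]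
      _ ≤ (∫⁻ x in Ω, min (f j x) (D M x)) + ENNReal.ofReal (1 / M ^ 2) * C :=
          add_le_add le_rfl (mul_le_mul_right (le_iSup (fun j => ∫⁻ x in Ω, g j x) j) _)
  -- a.e. convergence of f j x to F x
  have haef : ∀ᵐ x ∂(volume.restrict Ω), Tendsto (fun j => f j x) atTop (𝓝 (F x)) := by
    filter_upwards [hae] with x hx
    have h1 : Tendsto (fun j => max (u j x) 0) atTop (𝓝 (max (u₀ x) 0)) :=
      hx.max tendsto_const_nhds
    have h2 : Tendsto (fun j => Real.exp (α * (max (u j x) 0) ^ 2) * ‖x‖ ^ (-γ)) atTop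
        (𝓝 (Real.exp (α * (max (u₀ x) 0) ^ 2) * ‖x‖ ^ (-γ))) :=
      (((h1.pow 2).const_mul α).rexp).mul_const _
    exact (ENNReal.continuous_ofReal.tendsto _).comp h2
  -- DCT for the truncated functions
  have hDCT : ∀ M : ℝ, Tendsto (fun j => ∫⁻ x in Ω, min (f j x) (D M x)) atTop
      (𝓝 (∫⁻ x in Ω, min (F x) (D M x))) := by
    intro M
    refine tendsto_lintegral_of_dominated_convergence (D M)
      (fun j => (hfm j).min (hDm M)) ?_ (hDfin M).ne ?_
    · exact fun j => Eventually.of_forall fun x => min_le_right _ _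
    · filter_upwards [haef] with x hx
      exact hx.min tendsto_const_nhds
  -- Fatou lower bound
  have hFatou : ∫⁻ x in Ω, F x ≤ liminf (fun j => ∫⁻ x in Ω, f j x) atTop := by
    have hcongr : ∫⁻ x in Ω, F x = ∫⁻ x in Ω, liminf (fun j => f j x) atTop := by
      refine lintegral_congr_ae ?_
      filter_upwards [haef] with x hx
      exact hx.liminf_eq.symm
    rw [hcongr]
    exact lintegral_liminf_le fun j => (hfm j)
  -- limsup upper bound
  have hLimsup : limsup (fun j => ∫⁻ x in Ω, f j x) atTop ≤ ∫⁻ x in Ω, F x := by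
    refine ENNReal.le_of_forall_pos_le_add fun ε hε hFfin => ?_
    -- choose M
    have htend : Tendsto (fun M : ℕ => ENNReal.ofReal (1 / ((M:ℝ) + 1) ^ 2) * C) atTop
        (𝓝 0) := by
      have h0 : Tendsto (fun M : ℕ => (1 : ℝ) / ((M:ℝ) + 1) ^ 2) atTop (𝓝 0) := by
        apply squeeze_zero (fun n => by positivity)
          (g := fun n : ℕ => 1 / ((n:ℝ) + 1))
        · intro n
          apply div_le_div_of_nonneg_left one_pos.le (by positivity)
          nlinarith [Nat.cast_nonneg (α := ℝ) n]
        · exact tendsto_one_div_add_atTop_nhds_zero_nat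
      have h1 : Tendsto (fun M : ℕ => ENNReal.ofReal (1 / ((M:ℝ) + 1) ^ 2)) atTop (𝓝 0) := by
        have := (ENNReal.continuous_ofReal.tendsto 0).comp h0
        simpa [Function.comp_def] using this
      simpa using ENNReal.Tendsto.mul_const h1 (Or.inr hCne)
    have hεpos : (0 : ENNReal) < (ε : ENNReal) := by exact_mod_cast hε
    obtain ⟨M, hM⟩ := (htend.eventually (gt_mem_nhds hεpos)).exists
    set Mr : ℝ := (M:ℝ) + 1 with hMr
    have hMr0 : 0 < Mr := by positivity
    have hstep : limsup (fun j => ∫⁻ x in Ω, f j x) atTop ≤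
        (∫⁻ x in Ω, min (F x) (D Mr x)) + ENNReal.ofReal (1 / Mr ^ 2) * C := by
      have hT : Tendsto (fun j => (∫⁻ x in Ω, min (f j x) (D Mr x)) +
          ENNReal.ofReal (1 / Mr ^ 2) * C) atTop
          (𝓝 ((∫⁻ x in Ω, min (F x) (D Mr x)) + ENNReal.ofReal (1 / Mr ^ 2) * C)) :=
        (hDCT Mr).add tendsto_const_nhds
      calc limsup (fun j => ∫⁻ x in Ω, f j x) atTop
          ≤ limsup (fun j => (∫⁻ x in Ω, min (f j x) (D Mr x)) +
              ENNReal.ofReal (1 / Mr ^ 2) * C) atTop :=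
            limsup_le_limsup (Eventually.of_forall fun j => hint Mr hMr0 j)
        _ = _ := hT.limsup_eq
    refine hstep.trans (add_le_add ?_ hM.le)
    exact lintegral_mono fun x => min_le_left _ _
  exact tendsto_of_le_liminf_of_limsup_le hFatou hLimsup
end

section
/- Fix r > 0. There exists a constant C > 0 (depending only on r) such that for every integer j ≥ 2, the Moser function v_j satisfies ∫_{ℝ²} v_j(x)² dx ≤ C / log j. -/
open MeasureTheory Real Filter Topology

/-- The Moser function `v_j` on ℝ²: `v_j(x) = (2π)^{-1/2} (log j)^{1/2}` if `|x| ≤ r/j`,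
`v_j(x) = (2π)^{-1/2} log(r/|x|) / (log j)^{1/2}` if `r/j < |x| < r`, and `0` if `|x| ≥ r`. -/
noncomputable def moserFn (r : ℝ) (j : ℕ) (x : EuclideanSpace ℝ (Fin 2)) : ℝ :=
  if ‖x‖ ≤ r / j then (2 * Real.pi) ^ (-(1 : ℝ) / 2) * (Real.log j) ^ ((1 : ℝ) / 2)
  else if ‖x‖ < r then
    (2 * Real.pi) ^ (-(1 : ℝ) / 2) * Real.log (r / ‖x‖) / (Real.log j) ^ ((1 : ℝ) / 2)
  else 0

open Set

/-- profile function -/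
noncomputable def moserProfile (r : ℝ) (y : ℝ) : ℝ :=
  if y < r then (Real.log (r / y)) ^ 2 else 0

lemma log_sq_le_four_mul (s : ℝ) (hs : 1 ≤ s) : (Real.log s) ^ 2 ≤ 4 * s := by
  have h0 : (0:ℝ) < s := lt_of_lt_of_le one_pos hs
  have hsq : Real.log s = 2 * Real.log (Real.sqrt s) := by
    rw [Real.log_sqrt h0.le]; ring
  have h1 : Real.log (Real.sqrt s) ≤ Real.sqrt s - 1 :=
    Real.log_le_sub_one_of_pos (Real.sqrt_pos.mpr h0)
  have h2 : Real.log s ≤ 2 * Real.sqrt s := by nlinarith [Real.sqrt_nonneg s]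
  have h3 : 0 ≤ Real.log s := Real.log_nonneg hs
  nlinarith [Real.sq_sqrt h0.le, Real.sqrt_nonneg s]

lemma moserProfile_meas (r : ℝ) : Measurable (moserProfile r) := by
  unfold moserProfile
  exact Measurable.ite measurableSet_Iio
    ((Real.measurable_log.comp (measurable_const.div measurable_id)).pow_const 2)
    measurable_const

lemma moserProfile_nonneg (r : ℝ) (y : ℝ) : 0 ≤ moserProfile r y := by
  unfold moserProfile; split <;> positivity

lemma oneD (r : ℝ) (hr : 0 < r) :
    IntegrableOn (fun y => y * moserProfile r y) (Ioi (0:ℝ)) := by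
  have hsplit : Ioc (0:ℝ) r ∪ Ioi r = Ioi 0 := Ioc_union_Ioi_eq_Ioi hr.le
  rw [← hsplit]
  apply IntegrableOn.union
  · refine Measure.integrableOn_of_bounded (M := 4 * r) measure_Ioc_lt_top.ne
      (measurable_id.mul (moserProfile_meas r)).aestronglyMeasurable ?_
    filter_upwards [ae_restrict_mem measurableSet_Ioc] with y hy
    obtain ⟨hy0, hyr⟩ := hy
    unfold moserProfile
    split_ifs with h
    · have hs : 1 ≤ r / y := (one_le_div hy0).mpr hyr
      have hb := log_sq_le_four_mul (r / y) hs
      have hnn : 0 ≤ y * Real.log (r / y) ^ 2 := by positivity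
      rw [Real.norm_eq_abs, abs_of_nonneg hnn]
      have h1 : y * Real.log (r / y) ^ 2 ≤ y * (4 * (r / y)) :=
        mul_le_mul_of_nonneg_left hb hy0.le
      have h2 : y * (4 * (r / y)) = 4 * r := by field_simp
      linarith
    · simp only [mul_zero, norm_zero]
      positivity
  · refine integrableOn_zero.congr_fun (fun y hy => ?_) measurableSet_Ioi
    have : ¬ (y < r) := not_lt.mpr (le_of_lt hy)
    simp [moserProfile, this]

lemma prodInt (r : ℝ) (hr : 0 < r) :
    IntegrableOn (fun p : ℝ × ℝ => p.1 * moserProfile r p.1) polarCoord.target := by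
  rw [polarCoord_target, IntegrableOn, Measure.volume_eq_prod, ← Measure.prod_restrict]
  have h1 : Integrable (fun y : ℝ => y * moserProfile r y)
      (volume.restrict (Ioi (0:ℝ))) := oneD r hr
  have h2 : Integrable (fun _ : ℝ => (1:ℝ)) (volume.restrict (Ioo (-π) π)) :=
    integrableOn_const measure_Ioo_lt_top.ne
  simpa using h1.mul_prod h2

lemma intG (r : ℝ) (hr : 0 < r) :
    Integrable (fun p : ℝ × ℝ => moserProfile r (Real.sqrt (p.1 ^ 2 + p.2 ^ 2))) := by
  set G : ℝ × ℝ → ℝ := fun p => moserProfile r (Real.sqrt (p.1 ^ 2 + p.2 ^ 2)) with hG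
  set B : ℝ × ℝ → ℝ × ℝ →L[ℝ] ℝ × ℝ := fun p =>
    LinearMap.toContinuousLinearMap (Matrix.toLin (Module.Basis.finTwoProd ℝ) (Module.Basis.finTwoProd ℝ)
      !![Real.cos p.2, -p.1 * Real.sin p.2; Real.sin p.2, p.1 * Real.cos p.2]) with hB
  have A : ∀ p ∈ polarCoord.target, HasFDerivWithinAt polarCoord.symm (B p) polarCoord.target p :=
    fun p _ => (hasFDerivAt_polarCoord_symm p).hasFDerivWithinAt
  have B_det : ∀ p, (B p).det = p.1 := by
    intro p
    conv_rhs => rw [← one_mul p.1, ← Real.cos_sq_add_sin_sq p.2]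
    simp only [hB, neg_mul, LinearMap.det_toContinuousLinearMap, LinearMap.det_toLin,
      Matrix.det_fin_two_of, sub_neg_eq_add]
    ring
  have key : IntegrableOn G (polarCoord.symm '' polarCoord.target) ↔
      IntegrableOn (fun p => |(B p).det| • G (polarCoord.symm p)) polarCoord.target :=
    integrableOn_image_iff_integrableOn_abs_det_fderiv_smul volume
      polarCoord.open_target.measurableSet A polarCoord.symm.injOn G
  have hEq : EqOn (fun p : ℝ × ℝ => p.1 * moserProfile r p.1)
      (fun p => |(B p).det| • G (polarCoord.symm p)) polarCoord.target := by
    intro p hp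
    have hp1 : 0 < p.1 := hp.1
    have hsymm : polarCoord.symm p = (p.1 * Real.cos p.2, p.1 * Real.sin p.2) := rfl
    have hnorm : Real.sqrt ((p.1 * Real.cos p.2) ^ 2 + (p.1 * Real.sin p.2) ^ 2) = p.1 := by
      have : (p.1 * Real.cos p.2) ^ 2 + (p.1 * Real.sin p.2) ^ 2 = p.1 ^ 2 := by
        have := Real.sin_sq_add_cos_sq p.2; nlinarith
      rw [this, Real.sqrt_sq hp1.le]
    simp only [B_det, abs_of_pos hp1, smul_eq_mul, hG, hsymm, hnorm]
  have hsrc : IntegrableOn G polarCoord.source := by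
    rw [← polarCoord.symm_image_target_eq_source]
    exact key.mpr (((prodInt r hr)).congr_fun hEq polarCoord.open_target.measurableSet)
  rw [IntegrableOn, Measure.restrict_congr_set polarCoord_source_ae_eq_univ,
    Measure.restrict_univ] at hsrc
  exact hsrc

lemma intE (r : ℝ) (hr : 0 < r) :
    Integrable (fun x : EuclideanSpace ℝ (Fin 2) => moserProfile r ‖x‖) := by
  have hmp : MeasurePreserving
      (fun x : EuclideanSpace ℝ (Fin 2) =>
        (MeasurableEquiv.finTwoArrow ((MeasurableEquiv.toLp 2 (Fin 2 → ℝ)).symm x)))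
      volume volume :=
    (volume_preserving_finTwoArrow ℝ).comp (EuclideanSpace.volume_preserving_symm_measurableEquiv_toLp (Fin 2))
  have hemb : MeasurableEmbedding
      (fun x : EuclideanSpace ℝ (Fin 2) =>
        (MeasurableEquiv.finTwoArrow ((MeasurableEquiv.toLp 2 (Fin 2 → ℝ)).symm x))) :=
    ((MeasurableEquiv.toLp 2 (Fin 2 → ℝ)).symm.trans MeasurableEquiv.finTwoArrow).measurableEmbedding
  have h := (hmp.integrable_comp_emb hemb
    (g := fun p : ℝ × ℝ => moserProfile r (Real.sqrt (p.1 ^ 2 + p.2 ^ 2)))).mpr (intG r hr)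
  have heq : (fun p : ℝ × ℝ => moserProfile r (Real.sqrt (p.1 ^ 2 + p.2 ^ 2))) ∘
      (fun x : EuclideanSpace ℝ (Fin 2) =>
        (MeasurableEquiv.finTwoArrow ((MeasurableEquiv.toLp 2 (Fin 2 → ℝ)).symm x)))
      = fun x : EuclideanSpace ℝ (Fin 2) => moserProfile r ‖x‖ := by
    funext x
    have hn : ‖x‖ = Real.sqrt (x 0 ^ 2 + x 1 ^ 2) := by
      rw [EuclideanSpace.norm_eq]
      simp [Fin.sum_univ_two, sq_abs]
    simp [Function.comp, MeasurableEquiv.finTwoArrow, hn, MeasurableEquiv.toLp]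
    rfl
  rwa [heq] at h

lemma pointwise_bound (r : ℝ) (hr : 0 < r) (j : ℕ) (hj : 2 ≤ j)
    (x : EuclideanSpace ℝ (Fin 2)) (hx : x ≠ 0) :
    (moserFn r j x) ^ 2 ≤ ((2 * Real.pi)⁻¹ * moserProfile r ‖x‖) / Real.log j := by
  set t := ‖x‖ with htdef
  have ht : 0 < t := norm_pos_iff.mpr hx
  have hj1 : (1:ℝ) < (j:ℝ) := by exact_mod_cast lt_of_lt_of_le one_lt_two hj
  have hL : 0 < Real.log j := Real.log_pos hj1
  have h2π : (0:ℝ) < 2 * π := by positivity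
  have ha : ((2 * π) ^ (-(1:ℝ) / 2)) ^ (2:ℕ) = (2 * π)⁻¹ := by
    rw [← Real.rpow_natCast ((2 * π) ^ (-(1:ℝ) / 2)) 2, ← Real.rpow_mul h2π.le]
    norm_num [Real.rpow_neg_one]
  have hb : ((Real.log j) ^ ((1:ℝ) / 2)) ^ (2:ℕ) = Real.log j := by
    rw [← Real.rpow_natCast ((Real.log j) ^ ((1:ℝ) / 2)) 2, ← Real.rpow_mul hL.le]
    norm_num
  unfold moserFn moserProfile
  rw [← htdef]
  split_ifs with h1 h2 h3
  · -- t ≤ r/j, t < r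
    have hjt : t * (j:ℝ) ≤ r := (le_div_iff₀ (by positivity : (0:ℝ) < (j:ℝ))).mp h1
    have hjle : (j:ℝ) ≤ r / t := (le_div_iff₀ ht).mpr (by nlinarith)
    have hlog : Real.log j ≤ Real.log (r / t) :=
      Real.log_le_log (by positivity) hjle
    rw [mul_pow, ha, hb, le_div_iff₀ hL]
    have hinv : (0:ℝ) ≤ (2 * π)⁻¹ := by positivity
    nlinarith [mul_le_mul hlog hlog hL.le (le_trans hL.le hlog)]
  · -- t ≤ r/j but ¬ t < r : contradiction
    exfalso
    have : r / (j:ℝ) < r := by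
      rw [div_lt_iff₀ (by positivity : (0:ℝ) < (j:ℝ))]
      nlinarith
    exact h2 (lt_of_le_of_lt h1 this)
  · -- r/j < t < r
    rw [div_pow, mul_pow, ha, hb]
  · -- t ≥ r
    simp [hL.le]

/-- For fixed r > 0 there is C > 0 such that for every integer j ≥ 2,
∫_{ℝ²} v_j(x)² dx ≤ C / log j. -/
theorem stmt_5 (r : ℝ) (hr : 0 < r) :
    ∃ C : ℝ, 0 < C ∧ ∀ j : ℕ, 2 ≤ j →
      ∫ x : EuclideanSpace ℝ (Fin 2), (moserFn r j x) ^ 2 ≤ C / Real.log j := by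
  set I := ∫ x : EuclideanSpace ℝ (Fin 2), moserProfile r ‖x‖ with hI
  have hInn : 0 ≤ I := integral_nonneg fun x => moserProfile_nonneg r ‖x‖
  refine ⟨1 + (2 * π)⁻¹ * I, by positivity, fun j hj => ?_⟩
  have hj1 : (1:ℝ) < (j:ℝ) := by exact_mod_cast lt_of_lt_of_le one_lt_two hj
  have hL : 0 < Real.log j := Real.log_pos hj1
  have hmaj : Integrable
      (fun x : EuclideanSpace ℝ (Fin 2) => ((2 * π)⁻¹ * moserProfile r ‖x‖) / Real.log j) :=
    ((intE r hr).const_mul _).div_const _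
  have h0 : ∀ᵐ x : EuclideanSpace ℝ (Fin 2), x ≠ 0 := by
    have hz : (volume : Measure (EuclideanSpace ℝ (Fin 2))) {0} = 0 := measure_singleton 0
    rw [ae_iff]
    simpa only [ne_eq, not_not, Set.setOf_eq_eq_singleton] using hz
  have hae : ∀ᵐ x : EuclideanSpace ℝ (Fin 2),
      (moserFn r j x) ^ 2 ≤ ((2 * π)⁻¹ * moserProfile r ‖x‖) / Real.log j :=
    h0.mono fun x hx => pointwise_bound r hr j hj x hx
  calc ∫ x : EuclideanSpace ℝ (Fin 2), (moserFn r j x) ^ 2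
      ≤ ∫ x : EuclideanSpace ℝ (Fin 2), ((2 * π)⁻¹ * moserProfile r ‖x‖) / Real.log j :=
        integral_mono_of_nonneg (ae_of_all _ fun x => sq_nonneg _) hmaj hae
    _ = ((2 * π)⁻¹ * I) / Real.log j := by
        rw [integral_div, integral_const_mul]
    _ ≤ (1 + (2 * π)⁻¹ * I) / Real.log j := by
        gcongr
        linarith
end

section
/- Fix r > 0 and 0 ≤ γ < 2. For each integer j ≥ 2 set ε_j = ∫_{ℝ²} v_j(x)² dx. Then ∫_{{x ∈ ℝ² : |x| ≤ r/j}} v_j(x)² · exp( (4π (1 - γ/2) / (1 + ε_j)) · v_j(x)² ) · |x|^{-γ} dx tends to +∞ as j → ∞. -/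
set_option maxHeartbeats 1000000

open MeasureTheory Real Filter Topology
open Metric Set

noncomputable section

lemma integrableOn_rpow_norm {g : ℝ} (hg : g < 2) (R : ℝ) :
    IntegrableOn (fun x : EuclideanSpace ℝ (Fin 2) => ‖x‖ ^ (-g)) (Metric.closedBall 0 R) := by
  set f : ℝ → ℝ := (Ioc (0:ℝ) R).indicator (fun s => Real.exp (Real.log s * (-g))) with hf
  have hfm : Measurable f :=
    (Real.measurable_exp.comp (Real.measurable_log.mul_const _)).indicator measurableSet_Ioc
  have hfeq : ∀ s : ℝ, 0 < s → s ≤ R → f s = s ^ (-g) := by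
    intro s h1 h2
    rw [hf, Set.indicator_of_mem (Set.mem_Ioc.mpr ⟨h1, h2⟩), Real.rpow_def_of_pos h1]
  -- 1D integrability
  have h1d : IntegrableOn (fun s : ℝ => f s * s) (Ioi (0:ℝ)) := by
    have heq : (fun s : ℝ => f s * s)
        = (Ioc (0:ℝ) R).indicator (fun s => Real.exp (Real.log s * (-g)) * s) := by
      funext s
      rw [hf]
      by_cases hs : s ∈ Ioc (0:ℝ) R <;> simp [hs]
    rw [heq]
    apply Integrable.integrableOn
    apply MeasureTheory.IntegrableOn.integrable_indicator _ measurableSet_Ioc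
    rcases le_or_gt R 0 with hR | hR
    · rw [Set.Ioc_eq_empty_of_le hR]; exact integrableOn_empty
    · have hii : IntervalIntegrable (fun s : ℝ => s ^ (1 - g)) volume 0 R :=
        intervalIntegral.intervalIntegrable_rpow' (by linarith)
      have h2 := (intervalIntegrable_iff_integrableOn_Ioc_of_le hR.le).mp hii
      apply h2.congr_fun _ measurableSet_Ioc
      intro s hs
      simp only
      rw [Real.rpow_def_of_pos hs.1,
        show Real.log s * (1 - g) = Real.log s * (-g) + Real.log s by ring,
        Real.exp_add, Real.exp_log hs.1]
  have hdim : Module.finrank ℝ (EuclideanSpace ℝ (Fin 2)) - 1 = 1 := by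
    simp [finrank_euclideanSpace_fin]
  have h4 : Integrable (fun r : Ioi (0:ℝ) => f r.1) (Measure.volumeIoiPow 1) := by
    rw [Measure.volumeIoiPow, integrable_withDensity_iff
      ((measurable_subtype_coe.pow_const 1).ennreal_ofReal)
      (ae_of_all _ fun r => ENNReal.ofReal_lt_top)]
    have h5 : IntegrableOn ((fun s : ℝ => f s * s) ∘ (Subtype.val : Ioi (0:ℝ) → ℝ))
        ((Subtype.val : Ioi (0:ℝ) → ℝ) ⁻¹' (Ioi (0:ℝ))) ((volume : Measure ℝ).comap Subtype.val) :=
      ((MeasurableEmbedding.subtype_coe measurableSet_Ioi).integrableOn_iff_comap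
        (by rw [Subtype.range_coe])).mp h1d
    rw [show ((Subtype.val : Ioi (0:ℝ) → ℝ) ⁻¹' (Ioi (0:ℝ))) = univ from
        eq_univ_of_forall fun r => r.2, integrableOn_univ] at h5
    have heq2 : (fun r : Ioi (0:ℝ) => f r.1 * (ENNReal.ofReal (r.1 ^ 1)).toReal)
        = fun r : Ioi (0:ℝ) => f r.1 * r.1 :=
      funext fun r => by rw [pow_one, ENNReal.toReal_ofReal r.2.out.le]
    rw [heq2]
    exact h5
  have h3 : Integrable (fun p : Metric.sphere (0 : EuclideanSpace ℝ (Fin 2)) 1 × Ioi (0:ℝ) => f p.2.1)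
      (((volume : Measure (EuclideanSpace ℝ (Fin 2))).toSphere).prod
        (Measure.volumeIoiPow (Module.finrank ℝ (EuclideanSpace ℝ (Fin 2)) - 1))) := by
    rw [hdim]
    have hasm : AEStronglyMeasurable (fun r : Ioi (0:ℝ) => f r.1)
        ((((volume : Measure (EuclideanSpace ℝ (Fin 2))).toSphere).prod (Measure.volumeIoiPow 1)).map Prod.snd) :=
      (hfm.comp measurable_subtype_coe).aestronglyMeasurable
    rw [show (fun p : Metric.sphere (0 : EuclideanSpace ℝ (Fin 2)) 1 × Ioi (0:ℝ) => f p.2.1)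
        = (fun r : Ioi (0:ℝ) => f r.1) ∘ Prod.snd from rfl,
      ← integrable_map_measure hasm measurable_snd.aemeasurable,
      Measure.map_snd_prod]
    exact h4.smul_measure (measure_ne_top _ _)
  have h2 : Integrable (fun x : ({0}ᶜ : Set (EuclideanSpace ℝ (Fin 2))) => f ‖x.1‖)
      ((volume : Measure (EuclideanSpace ℝ (Fin 2))).comap Subtype.val) := by
    have hiff := (Measure.measurePreserving_homeomorphUnitSphereProd
        (volume : Measure (EuclideanSpace ℝ (Fin 2)))).integrable_comp_emb
        (Homeomorph.measurableEmbedding _) (g := fun p : Metric.sphere (0 : EuclideanSpace ℝ (Fin 2)) 1 × Ioi (0:ℝ) => f p.2.1)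
    exact (hiff.mpr h3).congr (ae_of_all _ fun x => by simp)
  have h1 : IntegrableOn (fun x : EuclideanSpace ℝ (Fin 2) => f ‖x‖) (({0} : Set (EuclideanSpace ℝ (Fin 2)))ᶜ) := by
    rw [(MeasurableEmbedding.subtype_coe
        (measurableSet_singleton (0:EuclideanSpace ℝ (Fin 2))).compl).integrableOn_iff_comap
      (by rw [Subtype.range_coe]),
      show ((Subtype.val : (({0}:Set (EuclideanSpace ℝ (Fin 2)))ᶜ : Set (EuclideanSpace ℝ (Fin 2))) → EuclideanSpace ℝ (Fin 2)) ⁻¹' ({0}ᶜ)) = univ from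
        eq_univ_of_forall fun x => x.2, integrableOn_univ]
    exact h2
  have key : Integrable (fun x : EuclideanSpace ℝ (Fin 2) => f ‖x‖) := by
    rwa [IntegrableOn, MeasureTheory.restrict_compl_singleton] at h1
  have hsub : IntegrableOn (fun x : EuclideanSpace ℝ (Fin 2) => ‖x‖ ^ (-g)) (Metric.closedBall 0 R \ {0}) := by
    apply (key.integrableOn).congr_fun _
      ((measurableSet_closedBall).diff (measurableSet_singleton _))
    intro x hx
    have hx0 : 0 < ‖x‖ := norm_pos_iff.mpr (by simpa using hx.2)
    have hxR : ‖x‖ ≤ R := by simpa [mem_closedBall, dist_zero_right] using hx.1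
    exact hfeq _ hx0 hxR
  have h0 : IntegrableOn (fun x : EuclideanSpace ℝ (Fin 2) => ‖x‖ ^ (-g)) ({0} : Set (EuclideanSpace ℝ (Fin 2))) := by
    rw [IntegrableOn, Measure.restrict_eq_zero.mpr (measure_singleton _)]
    exact integrable_zero_measure
  apply (hsub.union h0).mono_set
  intro x hx
  by_cases hx0 : x = 0
  · exact Or.inr (by simp [hx0])
  · exact Or.inl ⟨hx, hx0⟩

lemma sq_rpow_half {a : ℝ} (ha : 0 ≤ a) : (a ^ ((1:ℝ)/2)) ^ 2 = a := by
  rw [← Real.rpow_natCast (a ^ ((1:ℝ)/2)) 2, ← Real.rpow_mul ha]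
  norm_num

lemma sq_rpow_neg_half {a : ℝ} (ha : 0 ≤ a) : (a ^ (-(1:ℝ)/2)) ^ 2 = a⁻¹ := by
  rw [← Real.rpow_natCast (a ^ (-(1:ℝ)/2)) 2, ← Real.rpow_mul ha]
  norm_num [Real.rpow_neg ha]

lemma log_sq_le {u : ℝ} (hu : 1 ≤ u) : (Real.log u) ^ 2 ≤ 4 * u := by
  have hu0 : (0:ℝ) < u := lt_of_lt_of_le one_pos hu
  have h1 : Real.log (Real.sqrt u) ≤ Real.sqrt u - 1 :=
    Real.log_le_sub_one_of_pos (Real.sqrt_pos.mpr hu0)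
  have h2 : Real.log (Real.sqrt u) = Real.log u / 2 := Real.log_sqrt hu0.le
  have h0 : 0 ≤ Real.log u := Real.log_nonneg hu
  nlinarith [Real.sq_sqrt hu0.le, Real.sqrt_nonneg u]

/-- For r > 0 and 0 ≤ γ < 2, with ε_j = ∫_{ℝ²} v_j², the integrals
∫_{|x| ≤ r/j} v_j² exp((4π(1-γ/2)/(1+ε_j)) v_j²) |x|^{-γ} dx tend to +∞ as j → ∞. -/
theorem stmt_7 (r : ℝ) (hr : 0 < r) (γ : ℝ) (hγ0 : 0 ≤ γ) (hγ2 : γ < 2) :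
    Tendsto (fun j : ℕ =>
        ∫ x in {x : EuclideanSpace ℝ (Fin 2) | ‖x‖ ≤ r / j},
          (moserFn r j x) ^ 2 *
            Real.exp ((4 * π * (1 - γ / 2) /
                (1 + ∫ y : EuclideanSpace ℝ (Fin 2), (moserFn r j y) ^ 2)) *
              (moserFn r j x) ^ 2) * ‖x‖ ^ (-γ))
      atTop atTop := by
  have hπ : (0:ℝ) < π := Real.pi_pos
  set V : ℝ := (volume (Metric.closedBall (0 : EuclideanSpace ℝ (Fin 2)) 1)).toReal with hVdef
  have hV : 0 < V := by
    rw [hVdef]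
    refine ENNReal.toReal_pos (ne_of_gt ?_) (ne_of_lt measure_closedBall_lt_top)
    exact measure_closedBall_pos _ _ one_pos
  have hvol : ∀ ρ : ℝ, 0 ≤ ρ →
      (volume (Metric.closedBall (0 : EuclideanSpace ℝ (Fin 2)) ρ)).toReal = ρ ^ 2 * V := by
    intro ρ hρ
    rw [Measure.addHaar_closedBall' _ _ hρ, ENNReal.toReal_mul,
      ENNReal.toReal_ofReal (by positivity)]
    congr 2
    simp [finrank_euclideanSpace_fin]
  set M : ℝ := ∫ x in Metric.closedBall (0 : EuclideanSpace ℝ (Fin 2)) r, ‖x‖ ^ (-(1:ℝ))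
    with hMdef
  have hM : 0 ≤ M :=
    setIntegral_nonneg measurableSet_closedBall fun x _ => Real.rpow_nonneg (norm_nonneg x) _
  set C₀ : ℝ := r^2 * V / (2*π) + 2*r*M/π with hC0def
  have hC₀ : 0 ≤ C₀ := by positivity
  set c : ℝ := V * r ^ (2-γ) * Real.exp (-(2*C₀)) / (2*π) with hcdef
  have hc : 0 < c := by positivity
  have hmain : ∀ j : ℕ, 2 ≤ j → c * Real.log j ≤
      ∫ x in {x : EuclideanSpace ℝ (Fin 2) | ‖x‖ ≤ r / j},
          (moserFn r j x) ^ 2 *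
            Real.exp ((4 * π * (1 - γ / 2) /
                (1 + ∫ y : EuclideanSpace ℝ (Fin 2), (moserFn r j y) ^ 2)) *
              (moserFn r j x) ^ 2) * ‖x‖ ^ (-γ) := by
    intro j hj
    have hj2 : (2:ℝ) ≤ (j:ℝ) := by exact_mod_cast hj
    have hj0 : (0:ℝ) < j := by linarith
    have hL : 0 < Real.log j := Real.log_pos (by linarith)
    have hrj : 0 < r / j := div_pos hr hj0
    set L := Real.log (j:ℝ) with hLdef
    set ε := ∫ y : EuclideanSpace ℝ (Fin 2), (moserFn r j y)^2 with hεdef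
    have hε0 : 0 ≤ ε := integral_nonneg fun y => sq_nonneg _
    have h1ε : (0:ℝ) < 1 + ε := by linarith
    -- the upper bound for ε
    have hεb : ε ≤ (r/j)^2 * V * (L / (2*π)) + (2*r/(π*L)) * M := by
      set IA : EuclideanSpace ℝ (Fin 2) → ℝ :=
        (Metric.closedBall (0 : EuclideanSpace ℝ (Fin 2)) (r/j)).indicator
          (fun _ => L / (2*π)) with hIA
      set IB : EuclideanSpace ℝ (Fin 2) → ℝ :=
        (Metric.closedBall (0 : EuclideanSpace ℝ (Fin 2)) r).indicator
          (fun x => (2*r/(π*L)) * ‖x‖ ^ (-(1:ℝ))) with hIB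
      have hIAint : Integrable IA := by
        apply MeasureTheory.IntegrableOn.integrable_indicator _ measurableSet_closedBall
        exact integrableOn_const measure_closedBall_lt_top.ne
      have hIBint : Integrable IB := by
        apply MeasureTheory.IntegrableOn.integrable_indicator _ measurableSet_closedBall
        exact (integrableOn_rpow_norm one_lt_two r).const_mul _
      have hpt : ∀ x, (moserFn r j x)^2 ≤ IA x + IB x := by
        intro x
        have hBnn : 0 ≤ IB x := by
          apply Set.indicator_nonneg
          intro y _
          positivity
        have hAnn : 0 ≤ IA x := by
          apply Set.indicator_nonneg
          intro y _
          positivity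
        rw [moserFn]
        split_ifs with h1 h2
        · have hx : x ∈ Metric.closedBall (0 : EuclideanSpace ℝ (Fin 2)) (r/j) :=
            mem_closedBall_zero_iff.mpr h1
          have hval : ((2*π)^(-(1:ℝ)/2) * L^((1:ℝ)/2))^2 = L/(2*π) := by
            rw [mul_pow, sq_rpow_neg_half (by positivity), sq_rpow_half hL.le, inv_mul_eq_div]
          have hIAx : IA x = L/(2*π) := by rw [hIA, Set.indicator_of_mem hx]
          rw [hLdef] at hval
          rw [hval, ← hLdef, ← hIAx]
          linarith
        · push_neg at h1
          have hx0 : 0 < ‖x‖ := lt_trans hrj h1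
          have hxr : x ∈ Metric.closedBall (0 : EuclideanSpace ℝ (Fin 2)) r :=
            mem_closedBall_zero_iff.mpr h2.le
          have hu : 1 ≤ r/‖x‖ := (one_le_div hx0).mpr h2.le
          have hlog : (Real.log (r/‖x‖))^2 ≤ 4 * (r/‖x‖) := log_sq_le hu
          have hIBx : IB x = (2*r/(π*L)) * ‖x‖ ^ (-(1:ℝ)) := by
            rw [hIB, Set.indicator_of_mem hxr]
          have hsq : ((2*π)^(-(1:ℝ)/2) * Real.log (r/‖x‖) / L^((1:ℝ)/2))^2
              = (2*π)⁻¹ * (Real.log (r/‖x‖))^2 / L := by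
            rw [div_pow, mul_pow, sq_rpow_neg_half (by positivity), sq_rpow_half hL.le]
          rw [hLdef] at hsq
          rw [hsq, ← hLdef]
          have hkey : (2*π)⁻¹ * (Real.log (r/‖x‖))^2 / L
              ≤ (2*r/(π*L)) * ‖x‖ ^ (-(1:ℝ)) := by
            have hstep : (2*π)⁻¹ * (Real.log (r/‖x‖))^2 / L
                ≤ (2*π)⁻¹ * (4 * (r/‖x‖)) / L := by gcongr
            refine hstep.trans (le_of_eq ?_)
            rw [Real.rpow_neg (norm_nonneg x), Real.rpow_one]
            field_simp
            ring
          linarith [hkey, hAnn]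
        · have : (0:ℝ)^2 = 0 := by norm_num
          rw [this]
          linarith
      have hmono : ε ≤ ∫ x, (IA x + IB x) := by
        rw [hεdef]
        exact integral_mono_of_nonneg (ae_of_all _ fun y => sq_nonneg _)
          (hIAint.add hIBint) (ae_of_all _ hpt)
      have hval : ∫ x, (IA x + IB x) = (r/j)^2 * V * (L / (2*π)) + (2*r/(π*L)) * M := by
        rw [integral_add hIAint hIBint, hIA, hIB, integral_indicator_const _ measurableSet_closedBall,
          integral_indicator measurableSet_closedBall, integral_const_mul,
          smul_eq_mul, measureReal_def, hvol _ hrj.le, ← hMdef]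
      linarith
    have hεL : ε * L ≤ C₀ := by
      have hLj : L ≤ (j:ℝ) := (Real.log_le_sub_one_of_pos hj0).trans (by linarith)
      have h1 : ε * L ≤ ((r/j)^2 * V * (L/(2*π)) + (2*r/(π*L)) * M) * L :=
        mul_le_mul_of_nonneg_right hεb hL.le
      have h2 : ((r/j)^2 * V * (L/(2*π)) + (2*r/(π*L)) * M) * L
          = r^2*V/(2*π) * (L^2/(j:ℝ)^2) + 2*r*M/π := by
        field_simp
      have h3 : L^2/(j:ℝ)^2 ≤ 1 := by
        rw [div_le_one (by positivity)]
        exact pow_le_pow_left₀ hL.le hLj 2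
      have h4 : r^2*V/(2*π) * (L^2/(j:ℝ)^2) ≤ r^2*V/(2*π) * 1 := by
        gcongr
      rw [hC0def]
      rw [h2] at h1
      linarith
    -- factor the integral
    set K := 4 * π * (1 - γ/2) / (1 + ε) with hKdef
    set cst := (2*π)^(-(1:ℝ)/2) * L^((1:ℝ)/2) with hcstdef
    have hcst2 : cst^2 = L / (2*π) := by
      rw [hcstdef, mul_pow, sq_rpow_neg_half (by positivity), sq_rpow_half hL.le,
        inv_mul_eq_div]
    have hSset : {x : EuclideanSpace ℝ (Fin 2) | ‖x‖ ≤ r / j}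
        = Metric.closedBall 0 (r/j) :=
      Set.ext fun x => (mem_closedBall_zero_iff).symm
    have hfact : (∫ x in {x : EuclideanSpace ℝ (Fin 2) | ‖x‖ ≤ r / j},
          (moserFn r j x) ^ 2 * Real.exp (K * (moserFn r j x) ^ 2) * ‖x‖ ^ (-γ))
        = cst^2 * Real.exp (K * cst^2) *
          ∫ x in Metric.closedBall (0 : EuclideanSpace ℝ (Fin 2)) (r/j), ‖x‖^(-γ) := by
      rw [hSset, setIntegral_congr_fun measurableSet_closedBall (g := fun x =>
          (cst^2 * Real.exp (K * cst^2)) * ‖x‖^(-γ)) ?_, integral_const_mul]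
      intro x hx
      simp only [moserFn, if_pos (mem_closedBall_zero_iff.mp hx), hcstdef, ← hLdef]
    -- lower bound for the rpow integral
    have hIlow : (r/j)^(2-γ) * V ≤
        ∫ x in Metric.closedBall (0 : EuclideanSpace ℝ (Fin 2)) (r/j), ‖x‖^(-γ) := by
      have hint := integrableOn_rpow_norm hγ2 (r/j)
      have hdiff : (Metric.closedBall (0 : EuclideanSpace ℝ (Fin 2)) (r/j) \ {0} : Set _)
          =ᵐ[volume] (Metric.closedBall (0 : EuclideanSpace ℝ (Fin 2)) (r/j) : Set _) := by
        rw [diff_ae_eq_self]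
        exact measure_mono_null inter_subset_right (measure_singleton _)
      rw [← setIntegral_congr_set hdiff]
      have hμ : volume (Metric.closedBall (0 : EuclideanSpace ℝ (Fin 2)) (r/j) \ {0})
          = volume (Metric.closedBall (0 : EuclideanSpace ℝ (Fin 2)) (r/j)) :=
        measure_congr hdiff
      have hlb := setIntegral_ge_of_const_le (c := (r/j)^(-γ))
        (measurableSet_closedBall.diff (measurableSet_singleton _))
        (by rw [hμ]; exact measure_closedBall_lt_top.ne)
        (fun x hx => Real.rpow_le_rpow_of_nonpos
          (norm_pos_iff.mpr (by simpa using hx.2))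
          (mem_closedBall_zero_iff.mp hx.1) (neg_nonpos.mpr hγ0))
        (hint.mono_set diff_subset)
      rw [measureReal_def, hμ, hvol _ hrj.le] at hlb
      refine le_trans (le_of_eq ?_) hlb
      have hpow : (r/j)^(-γ) * ((r/(j:ℝ)):ℝ)^(2:ℕ) = (r/j)^(2-γ) := by
        rw [← Real.rpow_natCast (r/(j:ℝ)) 2, ← Real.rpow_add hrj]
        ring_nf
      rw [← hpow]
      ring
    -- exponent computations
    have hKA : K * cst^2 = (2-γ) * L / (1+ε) := by
      rw [hcst2, hKdef]
      field_simp
      ring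
    have hrj_pow : (r/j)^(2-γ) = r^(2-γ) * Real.exp (-((2-γ)*L)) := by
      rw [Real.rpow_def_of_pos hrj, Real.rpow_def_of_pos hr,
        Real.log_div hr.ne' (ne_of_gt hj0), ← Real.exp_add]
      congr 1
      rw [hLdef]
      ring
    have hexp : -(2*C₀) ≤ (2-γ)*L/(1+ε) - (2-γ)*L := by
      have h1 : (2-γ)*L - (2-γ)*L/(1+ε) = (2-γ)*(ε*L)/(1+ε) := by
        field_simp
        ring
      have hnn : 0 ≤ (2-γ)*(ε*L) :=
        mul_nonneg (by linarith) (mul_nonneg hε0 hL.le)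
      have h2 : (2-γ)*(ε*L)/(1+ε) ≤ (2-γ)*(ε*L) := div_le_self hnn (by linarith)
      have h3 : (2-γ)*(ε*L) ≤ 2*C₀ := by nlinarith
      have h4 : (2-γ)*L - (2-γ)*L/(1+ε) ≤ 2*C₀ := by rw [h1]; exact h2.trans h3
      linarith
    -- assemble
    have hP : (0:ℝ) ≤ cst^2 * Real.exp (K * cst^2) :=
      mul_nonneg (sq_nonneg _) (Real.exp_pos _).le
    have heq : cst^2 * Real.exp (K * cst^2) * ((r/j)^(2-γ) * V)
        = (L/(2*π)) * Real.exp ((2-γ)*L/(1+ε) - (2-γ)*L) * (r^(2-γ) * V) := by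
      rw [hKA, hcst2, hrj_pow, Real.exp_sub, Real.exp_neg]
      field_simp [Real.exp_ne_zero]
    have hstep1 : c * L ≤ cst^2 * Real.exp (K * cst^2) * ((r/j)^(2-γ) * V) := by
      rw [heq, hcdef]
      have : V * r^(2-γ) * Real.exp (-(2*C₀)) / (2*π) * L
          = (L/(2*π)) * Real.exp (-(2*C₀)) * (r^(2-γ) * V) := by ring
      rw [this]
      gcongr

    calc c * L ≤ cst^2 * Real.exp (K * cst^2) * ((r/j)^(2-γ) * V) := hstep1
      _ ≤ cst^2 * Real.exp (K * cst^2) *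
          ∫ x in Metric.closedBall (0 : EuclideanSpace ℝ (Fin 2)) (r/j), ‖x‖^(-γ) := by
          gcongr
      _ = _ := by rw [← hfact, hKdef]
  have hlog : Tendsto (fun j : ℕ => c * Real.log j) atTop atTop :=
    (Real.tendsto_log_atTop.comp tendsto_natCast_atTop_atTop).const_mul_atTop hc
  apply tendsto_atTop_mono' atTop _ hlog
  filter_upwards [eventually_ge_atTop 2] with j hj
  exact hmain j hj
end
end
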